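/- Let K be a positive integer, let 𝓗 be a non-empty collection of graphs, and let G be a graph that does not contain H as a K-fat minor for any H ∈ 𝓗. Then there exists a graph Ĝ such that G is K-quasi-isometric to Ĝ and Ĝ does not contain H as a 3-fat minor for any H ∈ 𝓗. (Indeed, one may take Ĝ = G^K, the K-th power graph of G.) -/

import Mathlib

open SimpleGraph

/-- The distance between two vertex sets `X` and `Y` in a graph `G` is at least `K`
(measured with the extended graph distance, so unreachable pairs are at infinite distance). -/
def SimpleGraph.SetDistGE {V : Type*} (G : SimpleGraph V) (X Y : Set V) (K : ℕ) : Prop :=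
  ∀ x ∈ X, ∀ y ∈ Y, (K : ℕ∞) ≤ G.edist x y

/-- `B, P` form a `K`-fat minor model of `H` in `G`: branch sets `B v` and edge paths `P e`
induce connected subgraphs, incident pairs intersect, and all other pairs of sets in the model
are at distance at least `K`. -/
def SimpleGraph.IsFatMinorModel {V W : Type*} (G : SimpleGraph V) (H : SimpleGraph W) (K : ℕ)
    (B : W → Set V) (P : H.edgeSet → Set V) : Prop :=
  (∀ w, (G.induce (B w)).Connected) ∧
  (∀ e, (G.induce (P e)).Connected) ∧
  (∀ (w : W) (e : H.edgeSet), w ∈ (e : Sym2 W) → (B w ∩ P e).Nonempty) ∧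
  (∀ w w' : W, w ≠ w' → G.SetDistGE (B w) (B w') K) ∧
  (∀ e e' : H.edgeSet, e ≠ e' → G.SetDistGE (P e) (P e') K) ∧
  (∀ (w : W) (e : H.edgeSet), w ∉ (e : Sym2 W) → G.SetDistGE (B w) (P e) K)

/-- `G` contains `H` as a `K`-fat minor. -/
def SimpleGraph.HasFatMinor {V W : Type*} (G : SimpleGraph V) (H : SimpleGraph W) (K : ℕ) : Prop :=
  ∃ B P, G.IsFatMinorModel H K B P

/-- `φ` is a `q`-quasi-isometry from the graph `G` to the graph `G'`. -/
def SimpleGraph.IsQuasiIsometry {V V' : Type*} (q : ℕ) (G : SimpleGraph V) (G' : SimpleGraph V')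
    (φ : V → V') : Prop :=
  (∀ x y : V, (q : ℝ)⁻¹ * (G.dist x y : ℝ) - q ≤ (G'.dist (φ x) (φ y) : ℝ) ∧
     (G'.dist (φ x) (φ y) : ℝ) ≤ q * (G.dist x y : ℝ) + q) ∧
  ∀ v' : V', ∃ v : V, (G'.dist v' (φ v) : ℝ) ≤ q

universe u





namespace FatMinorAux

variable {V : Type*} (G : SimpleGraph V) (K : ℕ)

/-- The `K`-th power graph. -/
def pow : SimpleGraph V where
  Adj u v := u ≠ v ∧ G.edist u v ≤ K
  symm := by
    constructor
    intro u v ⟨h1, h2⟩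
    exact ⟨h1.symm, by rwa [edist_comm]⟩
  loopless := ⟨fun v h => h.1 rfl⟩

variable {G K}

lemma pow_adj {u v : V} : (pow G K).Adj u v ↔ u ≠ v ∧ G.edist u v ≤ K := Iff.rfl

lemma pow_edist_le_one {x y : V} (h : G.edist x y ≤ K) : (pow G K).edist x y ≤ 1 := by
  rcases eq_or_ne x y with rfl | hne
  · simp [SimpleGraph.edist_self]
  · exact (edist_eq_one_iff_adj.mpr (pow_adj.mpr ⟨hne, h⟩)).le

/-- Split a walk at position `n`. -/
lemma walk_split : ∀ {x y : V} (p : G.Walk x y) (n : ℕ),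
    ∃ (u : V) (q : G.Walk x u) (r : G.Walk u y), q.length ≤ n ∧ r.length ≤ p.length - n := by
  intro x y p
  induction p with
  | nil => exact fun n => ⟨_, .nil, .nil, by simp, by simp⟩
  | cons h p ih =>
    intro n
    cases n with
    | zero => exact ⟨_, .nil, .cons h p, by simp, by simp⟩
    | succ n =>
      obtain ⟨u, q1, r1, h1, h2⟩ := ih n
      exact ⟨u, .cons h q1, r1, by simpa using h1, by simpa using h2⟩

lemma edist_ge_of_pow_edist_ge {x y : V} (h3 : (3 : ℕ∞) ≤ (pow G K).edist x y) :
    (2 * K + 1 : ℕ∞) ≤ G.edist x y := by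
  by_contra hc
  push_neg at hc
  have hne : G.edist x y ≠ ⊤ := (hc.trans_le le_top).ne
  obtain ⟨p, hp⟩ := exists_walk_of_edist_ne_top hne
  have hlen : (p.length : ℕ∞) ≤ 2 * K := by
    have : G.edist x y < (2 * K : ℕ∞) + 1 := by exact_mod_cast hc
    have h2K : (2 * (K:ℕ∞)) ≠ ⊤ := by
      have h' : ((2*K : ℕ) : ℕ∞) ≠ ⊤ := ENat.coe_ne_top _
      push_cast at h'
      exact h'
    rw [ENat.lt_add_one_iff h2K] at this
    rw [hp]; exact_mod_cast this
  have hlenN : p.length ≤ 2 * K := by exact_mod_cast hlen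
  obtain ⟨u, q, r, hq, hr⟩ := walk_split p K
  have hr' : r.length ≤ K := hr.trans (by omega)
  have h1 : (pow G K).edist x u ≤ 1 :=
    pow_edist_le_one ((q.edist_le).trans (by exact_mod_cast hq))
  have h2 : (pow G K).edist u y ≤ 1 :=
    pow_edist_le_one ((r.edist_le).trans (by exact_mod_cast hr'))
  have := (SimpleGraph.edist_triangle (G := pow G K) (u := x) (v := u) (w := y)).trans
    (add_le_add h1 h2)
  have h4 : (3 : ℕ∞) ≤ 2 := h3.trans this
  norm_num at h4

lemma edist_le_K_mul_length : ∀ {x y : V} (p : (pow G K).Walk x y),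
    G.edist x y ≤ (K : ℕ∞) * p.length := by
  intro x y p
  induction p with
  | nil => simp [SimpleGraph.edist_self]
  | @cons x b y h p ih =>
    calc G.edist x y ≤ G.edist x b + G.edist b y := SimpleGraph.edist_triangle
      _ ≤ (K : ℕ∞) + (K : ℕ∞) * p.length := add_le_add h.2 ih
      _ = (K : ℕ∞) * ((p.cons h).length : ℕ∞) := by
          rw [Walk.length_cons]; push_cast; ring

lemma edist_le_K_mul_pow_edist (hK : 0 < K) {x y : V} :
    G.edist x y ≤ (K : ℕ∞) * (pow G K).edist x y := by
  by_cases h : (pow G K).Reachable x y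
  · obtain ⟨p, hp⟩ := h.exists_walk_length_eq_edist
    rw [← hp]
    exact edist_le_K_mul_length p
  · rw [edist_eq_top_of_not_reachable h, ENat.mul_top (by exact_mod_cast hK.ne')]
    exact le_top

lemma pow_reachable_iff (hK : 0 < K) {x y : V} :
    (pow G K).Reachable x y ↔ G.Reachable x y := by
  constructor
  · intro h
    rw [← edist_ne_top_iff_reachable] at h ⊢
    intro hc
    apply h
    have := edist_le_K_mul_pow_edist (G := G) hK (x := x) (y := y)
    rw [hc] at this
    rcases eq_or_ne ((pow G K).edist x y) ⊤ with h' | h'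
    · exact h'
    · exfalso
      lift (pow G K).edist x y to ℕ using h' with n hn
      have h2 : ((K * n : ℕ) : ℕ∞) = ⊤ := by
        push_cast
        exact top_le_iff.mp this
      exact ENat.coe_ne_top _ h2
  · intro h
    refine h.mono ?_
    intro u v huv
    exact ⟨huv.ne, by rw [← edist_eq_one_iff_adj] at huv; rw [huv]; exact_mod_cast Nat.one_le_iff_ne_zero.mpr hK.ne'⟩

lemma pow_dist_le (hK : 0 < K) (x y : V) : (pow G K).dist x y ≤ G.dist x y := by
  by_cases h : G.Reachable x y
  · have hle : (pow G K).edist x y ≤ G.edist x y := by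
      apply edist_anti
      intro u v huv
      exact ⟨huv.ne, by rw [← edist_eq_one_iff_adj] at huv; rw [huv]; exact_mod_cast Nat.one_le_iff_ne_zero.mpr hK.ne'⟩
    exact ENat.toNat_le_toNat hle (edist_ne_top_iff_reachable.mpr h)
  · rw [dist_eq_zero_of_not_reachable h,
      dist_eq_zero_of_not_reachable (fun hc => h ((pow_reachable_iff hK).mp hc))]

lemma dist_le_K_mul_pow_dist (hK : 0 < K) (x y : V) :
    G.dist x y ≤ K * (pow G K).dist x y := by
  by_cases h : G.Reachable x y
  · have h' : (pow G K).Reachable x y := (pow_reachable_iff hK).mpr h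
    have he := edist_le_K_mul_pow_edist (G := G) hK (x := x) (y := y)
    lift (pow G K).edist x y to ℕ using edist_ne_top_iff_reachable.mpr h' with n hn
    have hd : (pow G K).dist x y = n := by rw [SimpleGraph.dist, ← hn]; simp
    have : G.edist x y ≤ ((K * n : ℕ) : ℕ∞) := by
      refine he.trans (le_of_eq ?_); push_cast; ring
    have h1 : G.dist x y ≤ K * n := by
      have h2 := ENat.toNat_le_toNat this (ENat.coe_ne_top _)
      simpa [SimpleGraph.dist] using h2
    rw [hd]; exact h1
  · simp [dist_eq_zero_of_not_reachable h]


section Thicken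

/-- Thickening of a set by radius `r`. -/
def thicken (G : SimpleGraph V) (r : ℕ) (S : Set V) : Set V :=
  {x | ∃ s ∈ S, G.edist x s ≤ (r : ℕ∞)}

lemma subset_thicken {r : ℕ} {S : Set V} : S ⊆ thicken G r S :=
  fun s hs => ⟨s, hs, by simp [edist_self]⟩

lemma reachable_induce_of_support {T : Set V} :
    ∀ {x y : V} (p : G.Walk x y) (hs : ∀ v ∈ p.support, v ∈ T),
      (G.induce T).Reachable ⟨x, hs x p.start_mem_support⟩ ⟨y, hs y p.end_mem_support⟩ := by
  intro x y p
  induction p with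
  | nil => intro hs; rfl
  | @cons x b y h p ih =>
    intro hs
    have hb : b ∈ T := hs b (by simp)
    have hadj : (G.induce T).Adj ⟨x, hs x ((p.cons h).start_mem_support)⟩ ⟨b, hb⟩ := by
      simpa using h
    exact hadj.reachable.trans (ih fun v hv => hs v (by simp [hv]))

lemma edist_end_le_of_mem_support {a b v : V} (p : G.Walk a b) (hv : v ∈ p.support) :
    G.edist v b ≤ (p.length : ℕ∞) := by
  classical
  refine ((p.dropUntil v hv).edist_le).trans ?_
  exact_mod_cast p.length_dropUntil_le hv

lemma near_endpoint {a b v : V} (p : G.Walk a b) (hv : v ∈ p.support) :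
    G.edist v a ≤ ((p.length / 2 : ℕ) : ℕ∞) ∨ G.edist v b ≤ ((p.length / 2 : ℕ) : ℕ∞) := by
  classical
  have hspec := p.take_spec hv
  have hlen : (p.takeUntil v hv).length + (p.dropUntil v hv).length = p.length := by
    have h2 := congrArg Walk.length hspec
    rwa [Walk.length_append] at h2
  rcases le_or_gt (p.takeUntil v hv).length (p.length / 2) with h | h
  · left
    rw [SimpleGraph.edist_comm]
    exact ((p.takeUntil v hv).edist_le).trans (by exact_mod_cast h)
  · right
    have hd : (p.dropUntil v hv).length ≤ p.length / 2 := by omega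
    exact ((p.dropUntil v hv).edist_le).trans (by exact_mod_cast hd)

lemma thicken_connected (hK : 0 < K) {S : Set V}
    (h : ((pow G K).induce S).Connected) :
    (G.induce (thicken G (K / 2) S)).Connected := by
  set r := K / 2 with hr
  set T := thicken G r S with hT
  -- step 1: every element of T reaches its witness in S
  have step1 : ∀ (a : V) (ha : a ∈ T), ∃ (s : V) (hsS : s ∈ S),
      (G.induce T).Reachable ⟨a, ha⟩ ⟨s, subset_thicken hsS⟩ := by
    rintro a ⟨s, hsS, hdist⟩
    refine ⟨s, hsS, ?_⟩
    have hne : G.edist a s ≠ ⊤ := ne_top_of_le_ne_top (ENat.coe_ne_top _) hdist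
    obtain ⟨p, hp⟩ := exists_walk_of_edist_ne_top hne
    have hplen : (p.length : ℕ∞) ≤ (r : ℕ∞) := by rw [hp]; exact hdist
    have hsupport : ∀ v ∈ p.support, v ∈ T := by
      intro v hv
      exact ⟨s, hsS, (edist_end_le_of_mem_support p hv).trans hplen⟩
    exact reachable_induce_of_support p hsupport
  -- step 2: adjacent (in pow) elements of S are connected inside T
  have step2 : ∀ (a b : V) (ha : a ∈ S) (hb : b ∈ S), (pow G K).Adj a b →
      (G.induce T).Reachable ⟨a, subset_thicken ha⟩ ⟨b, subset_thicken hb⟩ := by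
    intro a b ha hb hadj
    have hdist : G.edist a b ≤ (K : ℕ∞) := hadj.2
    have hne : G.edist a b ≠ ⊤ := ne_top_of_le_ne_top (ENat.coe_ne_top _) hdist
    obtain ⟨p, hp⟩ := exists_walk_of_edist_ne_top hne
    have hplen : p.length ≤ K := by
      have : (p.length : ℕ∞) ≤ (K : ℕ∞) := by rw [hp]; exact hdist
      exact_mod_cast this
    have hsupport : ∀ v ∈ p.support, v ∈ T := by
      intro v hv
      have h2 : p.length / 2 ≤ r := by omega
      rcases near_endpoint p hv with h' | h'
      · exact ⟨a, ha, h'.trans (by exact_mod_cast h2)⟩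
      · exact ⟨b, hb, h'.trans (by exact_mod_cast h2)⟩
    exact reachable_induce_of_support p hsupport
  -- step 3: any two elements of S are connected inside T
  have step3 : ∀ (a b : ↥S),
      (G.induce T).Reachable ⟨a.1, subset_thicken a.2⟩ ⟨b.1, subset_thicken b.2⟩ := by
    intro a b
    obtain ⟨q⟩ := h.preconnected a b
    induction q with
    | nil => rfl
    | @cons x c y hadj q ih =>
      have hxc : (pow G K).Adj x.1 c.1 := by simpa using hadj
      exact (step2 x.1 c.1 x.2 c.2 hxc).trans ih
  rw [connected_iff]
  constructor
  · intro x y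
    obtain ⟨sx, hsx, hx⟩ := step1 x.1 x.2
    obtain ⟨sy, hsy, hy⟩ := step1 y.1 y.2
    exact (hx.trans (step3 ⟨sx, hsx⟩ ⟨sy, hsy⟩)).trans hy.symm
  · obtain ⟨⟨s, hs⟩⟩ := h.nonempty
    exact ⟨⟨s, subset_thicken hs⟩⟩

lemma thicken_setdist (hK : 0 < K) {X Y : Set V}
    (h : ∀ x ∈ X, ∀ y ∈ Y, (3 : ℕ∞) ≤ (pow G K).edist x y) :
    ∀ x' ∈ thicken G (K / 2) X, ∀ y' ∈ thicken G (K / 2) Y,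
      (K : ℕ∞) ≤ G.edist x' y' := by
  rintro x' ⟨x, hx, hxd⟩ y' ⟨y, hy, hyd⟩
  have h3 := edist_ge_of_pow_edist_ge (h x hx y hy)
  by_contra hc
  push_neg at hc
  have hne : G.edist x' y' ≠ ⊤ := ne_top_of_lt (hc.trans_le le_top)
  lift G.edist x' y' to ℕ using hne with m hm
  have hmK : m < K := by exact_mod_cast hc
  have htri : G.edist x y ≤ G.edist x x' + (G.edist x' y' + G.edist y' y) :=
    (SimpleGraph.edist_triangle (v := x')).trans
      (add_le_add_right (SimpleGraph.edist_triangle (v := y')) _)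
  have hxx' : G.edist x x' ≤ ((K / 2 : ℕ) : ℕ∞) := by rwa [SimpleGraph.edist_comm]
  have hbound : G.edist x y ≤ ((K / 2 + m + K / 2 : ℕ) : ℕ∞) := by
    refine htri.trans ?_
    rw [← hm]
    push_cast
    rw [add_assoc]
    exact add_le_add hxx' (add_le_add le_rfl hyd)
  have hfin : G.edist x y ≠ ⊤ := ne_top_of_le_ne_top (ENat.coe_ne_top _) hbound
  lift G.edist x y to ℕ using hfin with d hd
  have h1 : 2 * K + 1 ≤ d := by exact_mod_cast h3
  have h2 : d ≤ K / 2 + m + K / 2 := by exact_mod_cast hbound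
  omega

end Thicken

end FatMinorAux

/-- **Reducing coarseness.** If `K` is a positive integer, `ℋ` a non-empty collection of
graphs, and `G` a graph with no `K`-fat `H` minor for every `H ∈ ℋ`, then `G` is
`K`-quasi-isometric to a graph `Ghat` with no `3`-fat `H` minor for every `H ∈ ℋ`. -/
theorem quasi_isometric_to_graph_without_three_fat_minors
    {V : Type u} (K : ℕ) (hK : 0 < K) (G : SimpleGraph V)
    {ι : Type*} [Nonempty ι] {W : ι → Type*} (ℋ : ∀ i, SimpleGraph (W i))
    (hG : ∀ i, ¬ G.HasFatMinor (ℋ i) K) :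
    ∃ (V' : Type u) (Ghat : SimpleGraph V') (φ : V → V'),
      SimpleGraph.IsQuasiIsometry K G Ghat φ ∧ ∀ i, ¬ Ghat.HasFatMinor (ℋ i) 3 := by
  classical
  refine ⟨V, FatMinorAux.pow G K, id, ?_, ?_⟩
  · constructor
    · intro x y
      have h1 : (FatMinorAux.pow G K).dist x y ≤ G.dist x y := FatMinorAux.pow_dist_le hK x y
      have h2 : G.dist x y ≤ K * (FatMinorAux.pow G K).dist x y :=
        FatMinorAux.dist_le_K_mul_pow_dist hK x y
      have hKr : (1 : ℝ) ≤ K := by exact_mod_cast hK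
      have hKpos : (0 : ℝ) < K := by exact_mod_cast hK
      have h1r : ((FatMinorAux.pow G K).dist x y : ℝ) ≤ (G.dist x y : ℝ) := by exact_mod_cast h1
      have h2r : (G.dist x y : ℝ) ≤ K * ((FatMinorAux.pow G K).dist x y : ℝ) := by
        exact_mod_cast h2
      have hd0 : (0 : ℝ) ≤ ((FatMinorAux.pow G K).dist x y : ℝ) := by positivity
      constructor
      · have hinv : (K : ℝ)⁻¹ * (G.dist x y : ℝ) ≤ ((FatMinorAux.pow G K).dist x y : ℝ) := by
          rw [inv_mul_le_iff₀ hKpos]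
          exact h2r
        simp only [id]
        linarith
      · simp only [id]
        nlinarith [(show (0:ℝ) ≤ (G.dist x y : ℝ) by positivity)]
    · intro v'
      refine ⟨v', ?_⟩
      simp [SimpleGraph.dist_self]
  · intro i hmin
    apply hG i
    obtain ⟨B, P, hconnB, hconnP, hint, hBB, hPP, hBP⟩ := hmin
    refine ⟨fun w => FatMinorAux.thicken G (K / 2) (B w),
      fun e => FatMinorAux.thicken G (K / 2) (P e), ?_, ?_, ?_, ?_, ?_, ?_⟩
    · intro w; exact FatMinorAux.thicken_connected hK (hconnB w)
    · intro e; exact FatMinorAux.thicken_connected hK (hconnP e)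
    · intro w e hwe
      obtain ⟨v, hv1, hv2⟩ := hint w e hwe
      exact ⟨v, FatMinorAux.subset_thicken hv1, FatMinorAux.subset_thicken hv2⟩
    · intro w w' hne x hx y hy
      refine FatMinorAux.thicken_setdist hK (fun a ha b hb => ?_) x hx y hy
      exact_mod_cast hBB w w' hne a ha b hb
    · intro e e' hne x hx y hy
      refine FatMinorAux.thicken_setdist hK (fun a ha b hb => ?_) x hx y hy
      exact_mod_cast hPP e e' hne a ha b hb
    · intro w e hwe x hx y hy
      refine FatMinorAux.thicken_setdist hK (fun a ha b hb => ?_) x hx y hy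
      exact_mod_cast hBP w e hwe a ha b hb
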